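/- Let t1 ≥ 1 and t2 be integers, and let a1 ≤ b1 and a2 ≤ b2 be integers such that for every x ∈ Icc a2 b2 one has x + t2 − t1 ∈ Icc a1 b1 (the range of the second pairing is contained in the range Icc (a1+t1) (b1+t1) of the first). Let r1 x y ↔ x ∈ Icc a1 b1 ∧ y = x + t1, let r2 x y ↔ x ∈ Icc a2 b2 ∧ y = x + t2, and let r2' x y ↔ x ∈ Icc a2 b2 ∧ y = x + (t2 − t1) (the transmission of r2 by r1). Then for all x, y, EqvGen (r1 ⊔ r2) x y holds if and only if EqvGen (r1 ⊔ r2') x y holds; transmission does not change the orbit equivalence. -/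
import Mathlib


open Relation

/-- Transmission: if the range of `r2` is contained in the range of `r1`, then replacing
`r2` by its composition with the inverse of `r1` (translation distance `t2 - t1`) does
not change the orbit equivalence. -/
theorem transmission_preserves_orbits (t1 t2 a1 b1 a2 b2 : ℤ)
    (ht1 : 1 ≤ t1) (h1 : a1 ≤ b1) (h2 : a2 ≤ b2)
    (hrange : ∀ x ∈ Set.Icc a2 b2, x + t2 - t1 ∈ Set.Icc a1 b1)
    (r1 r2 r2' : ℤ → ℤ → Prop)
    (hr1 : ∀ x y, r1 x y ↔ x ∈ Set.Icc a1 b1 ∧ y = x + t1)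
    (hr2 : ∀ x y, r2 x y ↔ x ∈ Set.Icc a2 b2 ∧ y = x + t2)
    (hr2' : ∀ x y, r2' x y ↔ x ∈ Set.Icc a2 b2 ∧ y = x + (t2 - t1)) :
    ∀ x y, EqvGen (r1 ⊔ r2) x y ↔ EqvGen (r1 ⊔ r2') x y := by
  intro x y
  have key : ∀ a, a ∈ Set.Icc a2 b2 →
      r2' a (a + (t2 - t1)) ∧ r1 (a + (t2 - t1)) (a + t2) := by
    intro a hmem
    refine ⟨(hr2' _ _).mpr ⟨hmem, rfl⟩, (hr1 _ _).mpr ⟨?_, by ring⟩⟩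
    have := hrange a hmem
    simp only [Set.mem_Icc] at this ⊢
    omega
  constructor
  · intro h
    induction h with
    | rel a b hab =>
      rcases hab with h | h
      · exact EqvGen.rel _ _ (Or.inl h)
      · rw [hr2] at h
        obtain ⟨hmem, rfl⟩ := h
        obtain ⟨k2, k1⟩ := key a hmem
        exact EqvGen.trans _ _ _ (EqvGen.rel (r := r1 ⊔ r2') _ _ (Or.inr k2))
          (EqvGen.rel _ _ (Or.inl k1))
    | refl a => exact EqvGen.refl a
    | symm a b _ ih => exact EqvGen.symm _ _ ih
    | trans a b c _ _ ih1 ih2 => exact EqvGen.trans _ _ _ ih1 ih2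
  · intro h
    induction h with
    | rel a b hab =>
      rcases hab with h | h
      · exact EqvGen.rel _ _ (Or.inl h)
      · rw [hr2'] at h
        obtain ⟨hmem, rfl⟩ := h
        obtain ⟨_, k1⟩ := key a hmem
        have h2 : r2 a (a + t2) := (hr2 _ _).mpr ⟨hmem, rfl⟩
        exact EqvGen.trans _ _ _ (EqvGen.rel (r := r1 ⊔ r2) _ _ (Or.inr h2))
          (EqvGen.symm _ _ (EqvGen.rel _ _ (Or.inl k1)))
    | refl a => exact EqvGen.refl a
    | symm a b _ ih => exact EqvGen.symm _ _ ih
    | trans a b c _ _ ih1 ih2 => exact EqvGen.trans _ _ _ ih1 ih2
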